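/- Let 𝔫 be a finite-dimensional nilpotent Lie algebra over ℂ and let ρ : 𝔫 → M_n(ℂ) be a Lie algebra homomorphism (a representation of 𝔫, where M_n(ℂ) carries the commutator bracket). Let x, y ∈ 𝔫 and let ρ(x) = S + N be a Jordan–Chevalley decomposition of ρ(x) (S diagonalizable, N nilpotent, SN = NS). Then S commutes with ρ(y): [S, ρ(y)] = 0. -/

import Mathlib

open Polynomial LinearMap

attribute [local instance 100] LieRing.ofAssociativeRing

lemma aux_aeval_apply_of_eigen {K M : Type*} [Field K] [AddCommGroup M] [Module K M]
    (f : Module.End K M) (μ : K) (v : M) (h : f v = μ • v) (p : K[X]) :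
    Polynomial.aeval f p v = p.eval μ • v := by
  have hk : ∀ m : ℕ, (f ^ m) v = μ ^ m • v := by
    intro m
    induction m with
    | zero => simp
    | succ m ih =>
      rw [pow_succ, Module.End.mul_apply, h, map_smul, ih, smul_smul, ← pow_succ']
  induction p using Polynomial.induction_on' with
  | add p q hp hq => simp [hp, hq, add_smul]
  | monomial k c =>
    simp [Polynomial.aeval_monomial, Polynomial.eval_monomial, Module.End.mul_apply,
      Module.algebraMap_end_apply, hk, smul_smul, mul_comm]

/-- The adjoint action of a diagonalizable complex matrix is a semisimple endomorphism. -/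
lemma aux_ad_isSemisimple {n : ℕ} {S P : Matrix (Fin n) (Fin n) ℂ} (hP : IsUnit P)
    (hdiag : (P * S * P⁻¹).IsDiag) :
    (LieAlgebra.ad ℂ (Matrix (Fin n) (Fin n) ℂ) S).IsSemisimple := by
  classical
  have hdet : IsUnit P.det := (Matrix.isUnit_iff_isUnit_det P).mp hP
  have hP1 : P * P⁻¹ = 1 := Matrix.mul_nonsing_inv P hdet
  have hP2 : P⁻¹ * P = 1 := Matrix.nonsing_inv_mul P hdet
  set D : Matrix (Fin n) (Fin n) ℂ := P * S * P⁻¹ with hD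
  set d : Fin n → ℂ := fun i => D i i with hd
  have hDdiag : D = Matrix.diagonal d := by
    ext i j
    by_cases h : i = j
    · subst h; simp [Matrix.diagonal, hd]
    · simp [Matrix.diagonal, h, hdiag h]
  have hSD : S = P⁻¹ * D * P := by
    rw [hD]
    simp only [Matrix.mul_assoc]
    rw [hP2, Matrix.mul_one, ← Matrix.mul_assoc, hP2, Matrix.one_mul]
  set s : Finset ℂ := Finset.image (fun ij : Fin n × Fin n => d ij.1 - d ij.2) Finset.univ with hs
  set q : Polynomial ℂ := ∏ μ ∈ s, (Polynomial.X - Polynomial.C μ) with hq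
  have hq_sf : Squarefree q :=
    (Polynomial.separable_prod_X_sub_C_iff'.mpr (fun _ _ _ _ h => h)).squarefree
  have hEig : ∀ i j : Fin n,
      (LieAlgebra.ad ℂ (Matrix (Fin n) (Fin n) ℂ) D) (Matrix.single i j 1)
      = (d i - d j) • Matrix.single i j 1 := by
    intro i j
    rw [LieAlgebra.ad_apply, Ring.lie_def, hDdiag]
    ext a b
    simp only [Matrix.sub_apply, Matrix.diagonal_mul, Matrix.mul_diagonal, Matrix.smul_apply,
      Matrix.single, Matrix.of_apply, smul_eq_mul, mul_ite, ite_mul, mul_one, one_mul,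
      mul_zero, zero_mul]
    by_cases h : i = a ∧ j = b
    · obtain ⟨rfl, rfl⟩ := h; simp
    · simp [h]
  have hq_adD : Polynomial.aeval (LieAlgebra.ad ℂ (Matrix (Fin n) (Fin n) ℂ) D) q = 0 := by
    apply LinearMap.ext; intro B
    rw [LinearMap.zero_apply]
    induction B using Matrix.induction_on' with
    | h_zero => simp
    | h_add p1 p2 hp1 hp2 => rw [map_add, hp1, hp2, add_zero]
    | h_std_basis i j c =>
      have hc : Matrix.single i j c = c • Matrix.single i j 1 := by
        rw [Matrix.smul_single, smul_eq_mul, mul_one]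
      have hroot : Polynomial.eval (d i - d j) q = 0 := by
        rw [hq, Polynomial.eval_prod]
        apply Finset.prod_eq_zero (i := d i - d j)
        · exact Finset.mem_image.mpr ⟨(i, j), Finset.mem_univ _, rfl⟩
        · simp
      rw [hc, map_smul, aux_aeval_apply_of_eigen _ _ _ (hEig i j), hroot, zero_smul, smul_zero]
  set e : Matrix (Fin n) (Fin n) ℂ ≃ₗ[ℂ] Matrix (Fin n) (Fin n) ℂ := LinearEquiv.ofLinear
      ((LinearMap.mulLeft ℂ P⁻¹) ∘ₗ (LinearMap.mulRight ℂ P))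
      ((LinearMap.mulLeft ℂ P) ∘ₗ (LinearMap.mulRight ℂ P⁻¹))
      (by
        apply LinearMap.ext; intro B
        simp only [LinearMap.comp_apply, LinearMap.mulLeft_apply, LinearMap.mulRight_apply,
          LinearMap.id_apply, Matrix.mul_assoc]
        rw [hP2, Matrix.mul_one, ← Matrix.mul_assoc, hP2, Matrix.one_mul])
      (by
        apply LinearMap.ext; intro B
        simp only [LinearMap.comp_apply, LinearMap.mulLeft_apply, LinearMap.mulRight_apply,
          LinearMap.id_apply, Matrix.mul_assoc]
        rw [hP1, Matrix.mul_one, ← Matrix.mul_assoc, hP1, Matrix.one_mul]) with he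
  have he_apply : ∀ B : Matrix (Fin n) (Fin n) ℂ, e B = P⁻¹ * (B * P) := fun B => rfl
  have he_comm : (e : Matrix (Fin n) (Fin n) ℂ →ₗ[ℂ] Matrix (Fin n) (Fin n) ℂ)
      ∘ₗ (LieAlgebra.ad ℂ (Matrix (Fin n) (Fin n) ℂ) D)
      = (LieAlgebra.ad ℂ (Matrix (Fin n) (Fin n) ℂ) S) ∘ₗ e := by
    apply LinearMap.ext; intro B
    simp only [LinearMap.comp_apply, LinearEquiv.coe_coe, LieAlgebra.ad_apply, Ring.lie_def]
    rw [he_apply, he_apply, hSD]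
    simp only [Matrix.mul_sub, Matrix.sub_mul, Matrix.mul_assoc]
    rw [Matrix.mul_nonsing_inv_cancel_left _ _ hdet, Matrix.mul_nonsing_inv_cancel_left _ _ hdet]
  rw [← LinearEquiv.isSemisimple_iff (LieAlgebra.ad ℂ (Matrix (Fin n) (Fin n) ℂ) D)
    (LieAlgebra.ad ℂ (Matrix (Fin n) (Fin n) ℂ) S) e he_comm]
  exact Module.End.isSemisimple_of_squarefree_aeval_eq_zero hq_sf hq_adD


/-- A complex square matrix is diagonalizable (semisimple) if it is conjugate to a
diagonal matrix. -/
def Matrix.IsDiagonalizable {n : ℕ} (A : Matrix (Fin n) (Fin n) ℂ) : Prop :=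
  ∃ P : Matrix (Fin n) (Fin n) ℂ, IsUnit P ∧ (P * A * P⁻¹).IsDiag

/-- Let `ρ` be a matrix representation of a finite-dimensional nilpotent complex Lie
algebra `𝔫`, and let `ρ x = S + N` be a Jordan–Chevalley decomposition.  Then
`[S, ρ y] = 0` for every `y ∈ 𝔫`. -/
theorem semisimplePart_lie_apply_eq_zero {L : Type*} [LieRing L] [LieAlgebra ℂ L]
    [FiniteDimensional ℂ L] [LieRing.IsNilpotent L] {n : ℕ}
    (ρ : L →ₗ⁅ℂ⁆ Matrix (Fin n) (Fin n) ℂ) (x y : L)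
    (S N : Matrix (Fin n) (Fin n) ℂ) (hx : ρ x = S + N)
    (hS : S.IsDiagonalizable) (hN : IsNilpotent N) (hSN : S * N = N * S) :
    ⁅S, ρ y⁆ = 0 := by
  classical
  obtain ⟨P, hP, hdiag⟩ := hS
  set T := LieAlgebra.ad ℂ (Matrix (Fin n) (Fin n) ℂ) S with hT
  set Tn := LieAlgebra.ad ℂ (Matrix (Fin n) (Fin n) ℂ) N with hTn
  set F := LieAlgebra.ad ℂ (Matrix (Fin n) (Fin n) ℂ) (ρ x) with hF
  have hT_ss : T.IsSemisimple := aux_ad_isSemisimple hP hdiag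
  have hTn_nil : IsNilpotent Tn := LieAlgebra.ad_nilpotent_of_nilpotent (R := ℂ) hN
  have hFeq : F = T + Tn := by rw [hF, hx, map_add, hT, hTn]
  have hcomm : Commute T Tn := by
    have hbr : ⁅S, N⁆ = (0 : Matrix (Fin n) (Fin n) ℂ) := by
      rw [Ring.lie_def, hSN, sub_self]
    have h2 : ⁅T, Tn⁆ = 0 := by
      rw [hT, hTn, ← LieHom.map_lie, hbr, map_zero]
    rw [Commute, SemiconjBy, ← sub_eq_zero, ← Ring.lie_def]
    exact h2
  have hcommTF : Commute T F := by rw [hFeq]; exact (Commute.refl T).add_right hcomm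
  have hcommTnF : Commute Tn F := by rw [hFeq]; exact (hcomm.symm).add_right (Commute.refl Tn)
  obtain ⟨k, hk⟩ := LieAlgebra.nilpotent_ad_of_nilpotent_algebra ℂ L
  have hpow : ∀ (m : ℕ) (z : L), (F ^ m) (ρ z) = ρ ((LieAlgebra.ad ℂ L x ^ m) z) := by
    intro m
    induction m with
    | zero => intro z; simp
    | succ m ih =>
      intro z
      rw [pow_succ, Module.End.mul_apply]
      have h1 : F (ρ z) = ρ ⁅x, z⁆ := by
        rw [hF, LieAlgebra.ad_apply, ← LieHom.map_lie]
      rw [h1, ih ⁅x, z⁆, pow_succ, Module.End.mul_apply, LieAlgebra.ad_apply]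
  have hFy : (F ^ k) (ρ y) = 0 := by
    rw [hpow k y, hk x, LinearMap.zero_apply, map_zero]
  set W : Submodule ℂ (Matrix (Fin n) (Fin n) ℂ) := LinearMap.ker (F ^ k) with hW
  have hyW : ρ y ∈ W := hFy
  have hmem : ∀ (G : Module.End ℂ (Matrix (Fin n) (Fin n) ℂ)), Commute G F →
      ∀ B ∈ W, G B ∈ W := by
    intro G hG B hB
    have : (F ^ k) (G B) = G ((F ^ k) B) := by
      rw [← Module.End.mul_apply, ← Module.End.mul_apply, (hG.symm.pow_left k).eq]
    rw [LinearMap.mem_ker] at hB ⊢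
    rw [this, hB, map_zero]
  have hW_T : ∀ B ∈ W, T B ∈ W := hmem T hcommTF
  have hW_Tn : ∀ B ∈ W, Tn B ∈ W := hmem Tn hcommTnF
  have hW_F : ∀ B ∈ W, F B ∈ W := hmem F (Commute.refl F)
  have hT'_ss : Module.End.IsSemisimple (T.restrict hW_T) := hT_ss.restrict hW_T
  have hF'_nil : IsNilpotent (F.restrict hW_F) := by
    refine ⟨k, ?_⟩
    rw [Module.End.pow_restrict]
    apply LinearMap.ext; intro B
    apply Subtype.ext
    simpa only [LinearMap.restrict_coe_apply, LinearMap.zero_apply, ZeroMemClass.coe_zero]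
      using LinearMap.mem_ker.mp B.2
  have hTn'_nil : IsNilpotent (Tn.restrict hW_Tn) := by
    obtain ⟨r, hr⟩ := hTn_nil
    refine ⟨r, ?_⟩
    rw [Module.End.pow_restrict]
    apply LinearMap.ext; intro B
    apply Subtype.ext
    simp only [LinearMap.restrict_coe_apply, LinearMap.zero_apply, ZeroMemClass.coe_zero, hr]
  have hcomm' : Commute (F.restrict hW_F) (Tn.restrict hW_Tn) :=
    LinearMap.restrict_commute hcommTnF.symm hW_F hW_Tn
  have hT'_nil : IsNilpotent (T.restrict hW_T) := by
    have h := hcomm'.isNilpotent_sub hF'_nil hTn'_nil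
    have heq : F.restrict hW_F - Tn.restrict hW_Tn = T.restrict hW_T := by
      apply LinearMap.ext; intro B
      apply Subtype.ext
      have h2 : F ↑B - Tn ↑B = T ↑B := by rw [hFeq]; simp
      simpa only [LinearMap.sub_apply, AddSubgroupClass.coe_sub,
        LinearMap.restrict_coe_apply] using h2
    rwa [heq] at h
  have hT'_zero : T.restrict hW_T = 0 :=
    Module.End.eq_zero_of_isNilpotent_isSemisimple hT'_nil hT'_ss
  have : T (ρ y) = 0 := by
    have := LinearMap.congr_fun hT'_zero ⟨ρ y, hyW⟩
    simpa using congrArg Subtype.val this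
  have hfinal : T (ρ y) = ⁅S, ρ y⁆ := by rw [hT, LieAlgebra.ad_apply]
  rw [← hfinal]
  exact this
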